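/- For $u \le_k w$ in $S_n$ and $\omega_k \in \mathbb{Z}^n$ the vector with first $k$ entries $1$ and remaining entries $0$, the function $f_{u,w} = u \circ t_{\omega_k} \circ w^{-1}$ (where $t_{\omega_k}(i) = i + n\cdot(\omega_k)_{i \bmod n}$ suitably extended) is a bounded affine permutation of type $(k,n)$: it is a bijection $\mathbb{Z} \to \mathbb{Z}$ with $f(i+n) = f(i)+n$, satisfies $i \le f(i) \le i+n$ for all $i$, and $\frac{1}{n}\sum_{i=1}^n (f(i)-i) = k$. -/

import Mathlib

/-- Coxeter length of a permutation of `Fin n`: the number of inversions. -/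
def len {n : ℕ} (u : Equiv.Perm (Fin n)) : ℕ :=
  (Finset.univ.filter fun p : Fin n × Fin n => p.1 < p.2 ∧ u p.2 < u p.1).card

/-- `w` covers `u` in the strong Bruhat order: `w = u·t` for a transposition `t`
and `ℓ(w) = ℓ(u) + 1`. -/
def BruhatCover {n : ℕ} (u w : Equiv.Perm (Fin n)) : Prop :=
  (∃ i j : Fin n, i ≠ j ∧ w = u * Equiv.swap i j) ∧ len w = len u + 1

/-- The strong Bruhat order on `S_n`. -/
def BruhatLE {n : ℕ} (u w : Equiv.Perm (Fin n)) : Prop :=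
  Relation.ReflTransGen BruhatCover u w

/-- The image `u({1,…,k})`, zero-indexed as `u({i : i.val < k})`. -/
def kImage {n : ℕ} (k : ℕ) (u : Equiv.Perm (Fin n)) : Finset (Fin n) :=
  (Finset.univ.filter fun i : Fin n => i.val < k).image u

/-- `w` is a `k`-cover of `u`: a Bruhat cover with `w({1,…,k}) ≠ u({1,…,k})`. -/
def KBruhatCover {n : ℕ} (k : ℕ) (u w : Equiv.Perm (Fin n)) : Prop :=
  BruhatCover u w ∧ kImage k u ≠ kImage k w

/-- The `k`-Bruhat order on `S_n`: transitive closure of `k`-covers. -/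
def KBruhatLE {n : ℕ} (k : ℕ) (u w : Equiv.Perm (Fin n)) : Prop :=
  Relation.ReflTransGen (KBruhatCover k) u w

/-- `z` lies in the Young subgroup `S_k × S_{n-k}`, i.e. `z` fixes the sets
`{1,…,k}` and `{k+1,…,n}` setwise. -/
def IsYoung {n : ℕ} (k : ℕ) (z : Equiv.Perm (Fin n)) : Prop :=
  ∀ i : Fin n, (z i).val < k ↔ i.val < k

/-- `u` is anti-Grassmannian of type `(k,n)`: decreasing on `{1,…,k}` and on
`{k+1,…,n}` (zero-indexed: on `val < k` and on `k ≤ val`). -/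
def AntiGrass {n : ℕ} (k : ℕ) (u : Equiv.Perm (Fin n)) : Prop :=
  (∀ a b : Fin n, a < b → b.val < k → u b < u a) ∧
  (∀ a b : Fin n, a < b → k ≤ a.val → u b < u a)

/-- The residue of `i : ℤ` modulo `n`, as an element of `Fin n` (zero-indexed). -/
def resFin {n : ℕ} [NeZero n] (i : ℤ) : Fin n :=
  ⟨(i % (n : ℤ)).toNat, by
    have hn : 0 < (n : ℤ) := by exact_mod_cast Nat.pos_of_ne_zero (NeZero.ne n)
    have h1 := Int.emod_nonneg i (ne_of_gt hn)
    have h2 := Int.emod_lt_of_pos i hn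
    omega⟩

/-- The `n`-periodic extension of a permutation of `Fin n` to a bijection of `ℤ`. -/
def extPerm {n : ℕ} [NeZero n] (u : Equiv.Perm (Fin n)) : ℤ → ℤ :=
  fun i => (n : ℤ) * (i / (n : ℤ)) + ((u (resFin i)).val : ℤ)

/-- The translation element `t_J : ℤ → ℤ`, sending `i ↦ i + n` when the residue
of `i` lies in `J`, and fixing `i` otherwise. -/
def transJ {n : ℕ} [NeZero n] (J : Finset (Fin n)) : ℤ → ℤ :=
  fun i => if resFin i ∈ J then i + (n : ℤ) else i

/-- The index set `ω_k = {1,…,k}` (zero-indexed: residues `< k`). -/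
def omegaSet (n k : ℕ) : Finset (Fin n) :=
  Finset.univ.filter fun i : Fin n => i.val < k

/-- The affine permutation `f_{u,w} = u ∘ t_{ω_k} ∘ w⁻¹`. -/
def fUW {n : ℕ} [NeZero n] (k : ℕ) (u w : Equiv.Perm (Fin n)) : ℤ → ℤ :=
  extPerm u ∘ transJ (omegaSet n k) ∘ extPerm w⁻¹

section Aux
variable {n : ℕ} [NeZero n]

lemma npos : (0:ℤ) < (n:ℤ) := by exact_mod_cast Nat.pos_of_ne_zero (NeZero.ne n)

lemma resFin_val (i : ℤ) : (((resFin i : Fin n)).val : ℤ) = i % (n:ℤ) := by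
  simp [resFin, Int.toNat_of_nonneg (Int.emod_nonneg i (ne_of_gt (npos (n := n))))]

lemma decomp (i : ℤ) : (n:ℤ) * (i / (n:ℤ)) + (((resFin i : Fin n)).val : ℤ) = i := by
  rw [resFin_val]; exact Int.mul_ediv_add_emod i n

lemma resFin_of (q : ℤ) (a : Fin n) : resFin ((n:ℤ)*q + (a.val:ℤ)) = a := by
  have h1 : ((n:ℤ)*q + (a.val:ℤ)) % (n:ℤ) = (a.val : ℤ) := by
    have := a.isLt
    rw [add_comm, Int.add_mul_emod_self_left]
    exact Int.emod_eq_of_lt (by positivity) (by exact_mod_cast this)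
  ext
  simp [resFin, h1]

lemma div_of (q : ℤ) (a : Fin n) : ((n:ℤ)*q + (a.val:ℤ)) / (n:ℤ) = q := by
  have := a.isLt
  have h0 : ((a.val:ℤ)) / (n:ℤ) = 0 := Int.ediv_eq_zero_of_lt (by positivity) (by exact_mod_cast this)
  rw [add_comm, Int.add_mul_ediv_left _ _ (ne_of_gt (npos (n:=n))), h0, zero_add]

lemma extPerm_apply (u : Equiv.Perm (Fin n)) (q : ℤ) (a : Fin n) :
    extPerm u ((n:ℤ)*q + (a.val:ℤ)) = (n:ℤ)*q + ((u a).val : ℤ) := by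
  simp [extPerm, resFin_of, div_of]

end Aux
section Len
variable {n : ℕ}

lemma len_lt_swap (v : Equiv.Perm (Fin n)) (p q : Fin n) (hpq : p < q) (hv : v p < v q) :
    len v < len (v * Equiv.swap p q) := by
  classical
  set w := v * Equiv.swap p q with hw
  have hwp : w p = v q := by simp [hw]
  have hwq : w q = v p := by simp [hw]
  have hwx : ∀ x : Fin n, x ≠ p → x ≠ q → w x = v x := by
    intro x h1 h2
    simp [hw, Equiv.swap_apply_of_ne_of_ne h1 h2]
  set S := (Finset.univ.filter fun P : Fin n × Fin n => P.1 < P.2 ∧ v P.2 < v P.1) with hS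
  set T := (Finset.univ.filter fun P : Fin n × Fin n => P.1 < P.2 ∧ w P.2 < w P.1) with hT
  have hPQ : (p, q) ∈ T := by
    simp only [hT, Finset.mem_filter, Finset.mem_univ, true_and]
    exact ⟨hpq, by rw [hwp, hwq]; exact hv⟩
  set ψ : Fin n × Fin n → Fin n × Fin n := fun P =>
    if P.1 = p ∨ P.2 = q then P
    else if P.2 = p then (if v q < v P.1 then P else (P.1, q))
    else if P.1 = q then (if v P.2 < v p then P else (p, P.2))
    else P with hψ
  set g : Fin n × Fin n → Fin n × Fin n := fun P =>
    if P.2 = q then (if v q < v P.1 then (P.1, q) else (P.1, p))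
    else if P.1 = p then (if v P.2 < v p then (p, P.2) else (q, P.2))
    else P with hg
  have hpq' : p ≠ q := ne_of_lt hpq
  have key : ∀ P ∈ S, ψ P ∈ T.erase (p, q) ∧ g (ψ P) = P := by
    rintro ⟨a, b⟩ hP
    simp only [hS, Finset.mem_filter, Finset.mem_univ, true_and] at hP
    obtain ⟨hab, hvba⟩ := hP
    have memT : ∀ x y : Fin n, x < y → w y < w x → (x, y) ∈ T := by
      intro x y h1 h2
      simp only [hT, Finset.mem_filter, Finset.mem_univ, true_and]
      exact ⟨h1, h2⟩
    by_cases hap : a = p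
    · -- branch 1a
      have hbq : b ≠ q := by
        intro h; rw [hap] at hvba; rw [h] at hvba; exact absurd hv (not_lt_of_gt hvba)
      have hbp : b ≠ p := by rw [← hap]; exact (ne_of_gt hab)
      have hψP : ψ (a, b) = (a, b) := by simp [hψ, hap]
      refine ⟨?_, ?_⟩
      · rw [hψP]
        refine Finset.mem_erase.mpr ⟨by simp [hbq], memT a b hab ?_⟩
        rw [hap, hwp, hwx b hbp hbq]
        rw [hap] at hvba
        exact lt_trans hvba hv
      · rw [hψP]
        have : v b < v p := by rw [← hap]; exact hvba
        simp [hg, hbq, hap, this]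
    · by_cases hbq : b = q
      · -- branch 1b
        have haq : a ≠ q := by rw [← hbq]; exact (ne_of_lt hab)
        have hψP : ψ (a, b) = (a, b) := by simp [hψ, hbq]
        have hvqa : v q < v a := by rw [← hbq]; exact hvba
        refine ⟨?_, ?_⟩
        · rw [hψP]
          refine Finset.mem_erase.mpr ⟨by simp [hap], memT a b hab ?_⟩
          rw [hbq, hwq, hwx a hap haq]
          exact lt_trans hv hvqa
        · rw [hψP]
          simp [hg, hbq, hvqa]
      · by_cases hbp : b = p
        · -- branch 2
          have haq : a ≠ q := ne_of_lt (lt_trans hab (hbp ▸ hpq))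
          have hvpa : v p < v a := by rw [← hbp]; exact hvba
          by_cases hc : v q < v a
          · have hψP : ψ (a, b) = (a, b) := by simp [hψ, hap, hbq, hbp, hc]
            refine ⟨?_, ?_⟩
            · rw [hψP]
              refine Finset.mem_erase.mpr ⟨by simp [hbq], memT a b hab ?_⟩
              rw [hbp, hwp, hwx a hap haq]
              exact hc
            · rw [hψP]; simp [hg, hbq, hap, hbp, hpq', Ne.symm hpq']
          · have hψP : ψ (a, b) = (a, q) := by simp [hψ, hap, hbq, hbp, hc]
            refine ⟨?_, ?_⟩
            · rw [hψP]
              refine Finset.mem_erase.mpr ⟨by simp [hap], memT a q (lt_trans (hbp ▸ hab) hpq) ?_⟩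
              rw [hwq, hwx a hap haq]
              exact hvpa
            · rw [hψP]; simp [hg, hc, hbp]
        · by_cases haq : a = q
          · -- branch 3
            have hvbq : v b < v q := by rw [← haq]; exact hvba
            by_cases hc : v b < v p
            · have hψP : ψ (a, b) = (a, b) := by simp [hψ, hap, hbq, hbp, haq, hc]
              refine ⟨?_, ?_⟩
              · rw [hψP]
                refine Finset.mem_erase.mpr ⟨by simp only [haq, Ne, Prod.mk.injEq, not_and]; exact fun h => (hpq' h.symm).elim, memT a b hab ?_⟩
                rw [haq, hwq, hwx b hbp hbq]
                exact hc
              · rw [hψP]; simp [hg, hbq, haq, hap, Ne.symm hpq']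
            · have hψP : ψ (a, b) = (p, b) := by simp [hψ, hap, hbq, hbp, haq, hc]
              refine ⟨?_, ?_⟩
              · rw [hψP]
                refine Finset.mem_erase.mpr ⟨by simp [hbq], memT p b (lt_trans hpq (haq ▸ hab)) ?_⟩
                rw [hwp, hwx b hbp hbq]
                exact hvbq
              · rw [hψP]; simp [hg, hbq, hc, haq]
          · -- branch 4
            have hψP : ψ (a, b) = (a, b) := by simp [hψ, hap, hbq, hbp, haq]
            refine ⟨?_, ?_⟩
            · rw [hψP]
              refine Finset.mem_erase.mpr ⟨by simp [hap], memT a b hab ?_⟩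
              rw [hwx a hap haq, hwx b hbp hbq]
              exact hvba
            · rw [hψP]; simp [hg, hbq, hap]
  have hinj : Set.InjOn ψ S := by
    intro P1 h1 P2 h2 heq
    have e1 := (key P1 h1).2
    have e2 := (key P2 h2).2
    rw [← e1, ← e2, heq]
  have hle : S.card ≤ (T.erase (p, q)).card :=
    Finset.card_le_card_of_injOn ψ (fun P hP => (key P hP).1) hinj
  have hcard : (T.erase (p, q)).card = T.card - 1 := Finset.card_erase_of_mem hPQ
  have hTpos : 0 < T.card := Finset.card_pos.mpr ⟨(p, q), hPQ⟩
  exact (by omega : S.card < T.card)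

end Len
section Mono
variable {n k : ℕ}

lemma kImage_swap_eq (u : Equiv.Perm (Fin n)) (p q : Fin n)
    (hiff : p.val < k ↔ q.val < k) : kImage k u = kImage k (u * Equiv.swap p q) := by
  classical
  ext y
  simp only [kImage, Finset.mem_image, Finset.mem_filter, Finset.mem_univ, true_and,
    Equiv.Perm.mul_apply]
  constructor
  · rintro ⟨x, hx, rfl⟩
    refine ⟨Equiv.swap p q x, ?_, by rw [Equiv.swap_apply_self]⟩
    rcases eq_or_ne x p with rfl | hxp
    · rw [Equiv.swap_apply_left]; exact hiff.mp hx
    · rcases eq_or_ne x q with rfl | hxq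
      · rw [Equiv.swap_apply_right]; exact hiff.mpr hx
      · rw [Equiv.swap_apply_of_ne_of_ne hxp hxq]; exact hx
  · rintro ⟨x, hx, rfl⟩
    refine ⟨Equiv.swap p q x, ?_, rfl⟩
    rcases eq_or_ne x p with rfl | hxp
    · rw [Equiv.swap_apply_left]; exact hiff.mp hx
    · rcases eq_or_ne x q with rfl | hxq
      · rw [Equiv.swap_apply_right]; exact hiff.mpr hx
      · rw [Equiv.swap_apply_of_ne_of_ne hxp hxq]; exact hx

lemma cover_mono (u w : Equiv.Perm (Fin n)) (h : KBruhatCover k u w) :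
    (∀ a : Fin n, a.val < k → u a ≤ w a) ∧ (∀ a : Fin n, k ≤ a.val → w a ≤ u a) := by
  obtain ⟨⟨⟨i, j, hij, hwij⟩, hlen⟩, hkim⟩ := h
  -- sort i j into p < q
  obtain ⟨p, q, hpq, hw⟩ : ∃ p q : Fin n, p < q ∧ w = u * Equiv.swap p q := by
    rcases lt_or_gt_of_ne hij with hlt | hgt
    · exact ⟨i, j, hlt, hwij⟩
    · exact ⟨j, i, hgt, by rw [hwij, Equiv.swap_comm]⟩
  have hwp : w p = u q := by rw [hw]; simp
  have hwq : w q = u p := by rw [hw]; simp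
  have hwx : ∀ x : Fin n, x ≠ p → x ≠ q → w x = u x := by
    intro x h1 h2
    rw [hw]; simp [Equiv.swap_apply_of_ne_of_ne h1 h2]
  -- u p < u q
  have hupq : u p < u q := by
    rcases lt_or_gt_of_ne (fun h => (ne_of_lt hpq) (u.injective h) : u p ≠ u q) with h' | h'
    · exact h'
    · exfalso
      have h1 : w p < w q := by rw [hwp, hwq]; exact h'
      have h2 := len_lt_swap w p q hpq h1
      have h3 : w * Equiv.swap p q = u := by
        rw [hw, mul_assoc, Equiv.swap_mul_self, mul_one]
      rw [h3] at h2
      omega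
  -- exactly one side
  have hsplit : p.val < k ∧ ¬ q.val < k := by
    by_contra hcon
    have hiff : p.val < k ↔ q.val < k := by
      have := hpq
      rw [Fin.lt_def] at this
      constructor
      · intro hp
        by_contra hq
        exact hcon ⟨hp, hq⟩
      · intro hq
        omega
    exact hkim (by rw [kImage_swap_eq u p q hiff, ← hw])
  obtain ⟨hpk, hqk⟩ := hsplit
  constructor
  · intro a ha
    rcases eq_or_ne a p with rfl | hap
    · rw [hwp]; exact le_of_lt hupq
    · rcases eq_or_ne a q with rfl | haq
      · exact absurd ha hqk
      · rw [hwx a hap haq]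
  · intro a ha
    rcases eq_or_ne a p with rfl | hap
    · omega
    · rcases eq_or_ne a q with rfl | haq
      · rw [hwq]; exact le_of_lt hupq
      · rw [hwx a hap haq]

lemma kle_mono (u w : Equiv.Perm (Fin n)) (h : KBruhatLE k u w) :
    (∀ a : Fin n, a.val < k → u a ≤ w a) ∧ (∀ a : Fin n, k ≤ a.val → w a ≤ u a) := by
  induction h with
  | refl => exact ⟨fun _ _ => le_rfl, fun _ _ => le_rfl⟩
  | tail _ hcov ih =>
    have hc := cover_mono _ _ hcov
    exact ⟨fun a ha => le_trans (ih.1 a ha) (hc.1 a ha),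
           fun a ha => le_trans (hc.2 a ha) (ih.2 a ha)⟩

end Mono
section Main
variable {n k : ℕ} [NeZero n]

lemma omegaSet_mem (a : Fin n) : a ∈ omegaSet n k ↔ a.val < k := by simp [omegaSet]

lemma fUW_master (u w : Equiv.Perm (Fin n)) (i : ℤ) :
    fUW k u w i = (n:ℤ)*(i/(n:ℤ)) + ((u (w⁻¹ (resFin i))).val : ℤ)
      + (if (w⁻¹ (resFin i) : Fin n).val < k then (n:ℤ) else 0) := by
  have h1 : extPerm w⁻¹ i = (n:ℤ)*(i/(n:ℤ)) + (((w⁻¹ (resFin i)) : Fin n).val : ℤ) := rfl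
  show extPerm u (transJ (omegaSet n k) (extPerm w⁻¹ i)) = _
  rw [h1]
  set q := i/(n:ℤ) with hq
  set a := (w⁻¹ (resFin i) : Fin n) with ha
  have h2 : transJ (omegaSet n k) ((n:ℤ)*q + (a.val:ℤ)) =
      if a.val < k then (n:ℤ)*(q+1) + (a.val:ℤ) else (n:ℤ)*q + (a.val:ℤ) := by
    simp only [transJ, resFin_of, omegaSet_mem]
    split_ifs with h
    · ring
    · rfl
  rw [h2]
  split_ifs with hak
  · rw [extPerm_apply]; ring
  · rw [extPerm_apply]; ring

lemma resFin_add_n (i : ℤ) : (resFin (i + (n:ℤ)) : Fin n) = resFin i := by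
  have h : (i + (n:ℤ)) % (n:ℤ) = i % (n:ℤ) := by
    conv_lhs => rw [show i + (n:ℤ) = i + (n:ℤ)*1 by ring]
    rw [Int.add_mul_emod_self_left]
  ext
  simp [resFin, h]

lemma ediv_add_n (i : ℤ) : (i + (n:ℤ)) / (n:ℤ) = i / (n:ℤ) + 1 := by
  rw [show i + (n:ℤ) = i + 1*(n:ℤ) by ring]
  exact Int.add_mul_ediv_right i 1 (ne_of_gt (npos (n:=n)))

lemma extPerm_cancel (u : Equiv.Perm (Fin n)) (i : ℤ) : extPerm u⁻¹ (extPerm u i) = i := by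
  conv_lhs => rw [← decomp (n:=n) i]
  rw [extPerm_apply u (i / (n:ℤ)) (resFin i), extPerm_apply u⁻¹ (i / (n:ℤ)) (u (resFin i)), (Equiv.Perm.inv_eq_iff_eq.mpr rfl : u⁻¹ (u (resFin i)) = resFin i)]
  exact decomp i

lemma extPerm_cancel' (u : Equiv.Perm (Fin n)) (i : ℤ) : extPerm u (extPerm u⁻¹ i) = i := by
  have := extPerm_cancel (u⁻¹) i
  rwa [inv_inv] at this

def tInv (J : Finset (Fin n)) : ℤ → ℤ := fun i => if resFin i ∈ J then i - (n:ℤ) else i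

lemma tInv_transJ (J : Finset (Fin n)) (i : ℤ) : tInv J (transJ J i) = i := by
  by_cases hm : (resFin i : Fin n) ∈ J
  · simp [transJ, tInv, hm, resFin_add_n]
  · simp [transJ, tInv, hm]

lemma transJ_tInv (J : Finset (Fin n)) (i : ℤ) : transJ J (tInv J i) = i := by
  by_cases hm : (resFin i : Fin n) ∈ J
  · have h : (resFin (i - (n:ℤ)) : Fin n) = resFin i := by
      have h2 := resFin_add_n (n:=n) (i - (n:ℤ))
      rw [sub_add_cancel] at h2
      exact h2.symm
    simp [transJ, tInv, hm, h]
  · simp [transJ, tInv, hm]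

lemma card_filter_lt (hk : k ≤ n) :
    (Finset.univ.filter fun i : Fin n => i.val < k).card = k := by
  have h : (Finset.univ.filter fun i : Fin n => i.val < k) =
      Finset.univ.map (Fin.castLEEmb hk) := by
    ext x
    simp only [Finset.mem_filter, Finset.mem_univ, true_and, Finset.mem_map]
    constructor
    · intro hx
      exact ⟨⟨x.val, hx⟩, by ext; rfl⟩
    · rintro ⟨y, -, rfl⟩
      simpa using y.isLt
  rw [h, Finset.card_map, Finset.card_univ, Fintype.card_fin]

end Main

/-- For `u ≤_k w`, the function `f_{u,w} = u ∘ t_{ω_k} ∘ w⁻¹` is a bounded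
affine permutation of type `(k,n)`. -/
theorem fUW_bounded_affine {n k : ℕ} [NeZero n] (hk : k ≤ n) (u w : Equiv.Perm (Fin n))
    (h : KBruhatLE k u w) :
    Function.Bijective (fUW k u w) ∧
    (∀ i : ℤ, fUW k u w (i + n) = fUW k u w i + n) ∧
    (∀ i : ℤ, i ≤ fUW k u w i ∧ fUW k u w i ≤ i + n) ∧
    (∑ i ∈ Finset.range n, (fUW k u w (i : ℤ) - (i : ℤ))) = (n : ℤ) * k := by
  have mono := kle_mono u w h
  refine ⟨?_, ?_, ?_, ?_⟩
  · -- Bijective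
    refine Function.bijective_iff_has_inverse.mpr
      ⟨extPerm w ∘ tInv (omegaSet n k) ∘ extPerm u⁻¹, ?_, ?_⟩
    · intro i
      show extPerm w (tInv (omegaSet n k) (extPerm u⁻¹
        (extPerm u (transJ (omegaSet n k) (extPerm w⁻¹ i))))) = i
      rw [extPerm_cancel u, tInv_transJ, extPerm_cancel' w]
    · intro i
      show extPerm u (transJ (omegaSet n k) (extPerm w⁻¹
        (extPerm w (tInv (omegaSet n k) (extPerm u⁻¹ i))))) = i
      rw [extPerm_cancel w, transJ_tInv, extPerm_cancel' u]
  · -- Periodicity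
    intro i
    rw [fUW_master, fUW_master, resFin_add_n, ediv_add_n]
    split_ifs <;> ring
  · -- Bounds
    intro i
    have hm := fUW_master (k := k) u w i
    have hd := decomp (n := n) i
    have hrw : (((w (w⁻¹ (resFin i))).val : ℤ)) = (((resFin i : Fin n)).val : ℤ) := by
      rw [show w (w⁻¹ (resFin i)) = resFin i from (Equiv.eq_symm_apply w).mp rfl]
    have h1 : (u (w⁻¹ (resFin i)) : Fin n).val < n := Fin.isLt _
    have h2 : ((resFin i : Fin n)).val < n := Fin.isLt _
    by_cases hak : ((w⁻¹ (resFin i) : Fin n)).val < k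
    · rw [if_pos hak] at hm
      have hle : ((u (w⁻¹ (resFin i))).val : ℤ) ≤ ((w (w⁻¹ (resFin i))).val : ℤ) := by
        exact_mod_cast Fin.le_def.mp (mono.1 _ hak)
      generalize hq : (n:ℤ)*(i/(n:ℤ)) = m at hm hd
      omega
    · rw [if_neg hak] at hm
      have hle : ((w (w⁻¹ (resFin i))).val : ℤ) ≤ ((u (w⁻¹ (resFin i))).val : ℤ) := by
        exact_mod_cast Fin.le_def.mp (mono.2 _ (le_of_not_gt hak))
      generalize hq : (n:ℤ)*(i/(n:ℤ)) = m at hm hd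
      omega
  · -- Sum
    rw [← Fin.sum_univ_eq_sum_range (fun i => fUW k u w (i : ℤ) - (i : ℤ)) n]
    have hterm : ∀ r : Fin n, fUW k u w ((r.val : ℤ)) - (r.val : ℤ)
        = (((u (w⁻¹ r)).val : ℤ) - (r.val : ℤ))
          + (if ((w⁻¹ r : Fin n)).val < k then (n:ℤ) else 0) := by
      intro r
      have hm := fUW_master (k := k) u w (r.val : ℤ)
      have h0 : ((r.val : ℤ)) / (n:ℤ) = 0 :=
        Int.ediv_eq_zero_of_lt (by positivity) (by exact_mod_cast r.isLt)
      have hres : (resFin ((r.val : ℤ)) : Fin n) = r := by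
        have := resFin_of (n := n) 0 r
        rwa [mul_zero, zero_add] at this
      rw [hm, h0, hres]
      ring
    rw [Finset.sum_congr rfl (fun r _ => hterm r), Finset.sum_add_distrib,
      Finset.sum_sub_distrib]
    have e1 : ∑ r : Fin n, ((u (w⁻¹ r)).val : ℤ) = ∑ r : Fin n, ((r.val : ℤ)) := by
      have := Equiv.sum_comp ((w⁻¹ : Equiv.Perm (Fin n)).trans u)
        (fun x : Fin n => ((x.val : ℤ)))
      simpa [Equiv.trans_apply] using this
    have e2 : (∑ r : Fin n, (if ((w⁻¹ r : Fin n)).val < k then (n:ℤ) else 0)) = (n:ℤ) * k := by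
      have hcomp := Equiv.sum_comp (w : Equiv.Perm (Fin n))
        (fun r : Fin n => (if ((w⁻¹ r : Fin n)).val < k then (n:ℤ) else 0))
      rw [← hcomp]
      simp only [show ∀ x, w⁻¹ (w x) = x from fun x => Equiv.Perm.inv_eq_iff_eq.mpr rfl]
      rw [Finset.sum_ite, Finset.sum_const, Finset.sum_const_zero, add_zero,
        card_filter_lt hk, nsmul_eq_mul]
      push_cast
      ring
    rw [e1, e2]
    ring
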